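/- arXiv:0708.1273 — 6 statements merged into one kernel-verified Lean document; each statement's English description precedes it below -/
import Mathlib

section
/- For integers x, y ≥ 0 and 0 ≤ a < a+x+y < b ≤ n, the composite σ_{a,b} ∘ σ_{a+x,b-y} ∘ σ_{a,b} ∘ σ_{a+y,b-x} is the identity permutation of {1,…,n}. -/
def sigmaMap (a b x : ℤ) : ℤ := if a + 1 ≤ x ∧ x ≤ b then a + b + 1 - x else x

theorem stmt_2 (n a b x y : ℤ) (hx : 0 ≤ x) (hy : 0 ≤ y) (h0 : 0 ≤ a)
    (h1 : a < a + x + y) (h2 : a + x + y < b) (hbn : b ≤ n) :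
    ∀ w ∈ Set.Icc (1 : ℤ) n,
      sigmaMap a b (sigmaMap (a + x) (b - y) (sigmaMap a b (sigmaMap (a + y) (b - x) w))) = w := by
  intro w hw
  simp only [sigmaMap]
  split_ifs <;> omega
end

section
/- For integers x, y, z > 0 and 0 ≤ a with b = a+x+y+z ≤ n, the composite σ_{a,b-z} ∘ σ_{a+y,b} ∘ σ_{a,b-x} ∘ σ_{a+z,b} ∘ σ_{a,b-y} ∘ σ_{a+x,b} is the identity permutation of {1,…,n}. -/
lemma s_pos {a b x : ℤ} (h1 : a + 1 ≤ x) (h2 : x ≤ b) : sigmaMap a b x = a + b + 1 - x :=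
  if_pos ⟨h1, h2⟩
lemma s_neg {a b x : ℤ} (h : ¬(a + 1 ≤ x ∧ x ≤ b)) : sigmaMap a b x = x := if_neg h

theorem stmt_3 (n a b x y z : ℤ) (hx : 0 < x) (hy : 0 < y) (hz : 0 < z) (h0 : 0 ≤ a)
    (hb : b = a + x + y + z) (hbn : b ≤ n) :
    ∀ w ∈ Set.Icc (1 : ℤ) n,
      sigmaMap a (b - z) (sigmaMap (a + y) b (sigmaMap a (b - x)
        (sigmaMap (a + z) b (sigmaMap a (b - y) (sigmaMap (a + x) b w))))) = w := by
  intro w hw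
  simp only [Set.mem_Icc] at hw
  rcases le_or_gt w a with h1 | h1
  · rw [s_neg (a := a + x) (b := b) (x := w) (by omega),
      s_neg (a := a) (b := b - y) (x := w) (by omega),
      s_neg (a := a + z) (b := b) (x := w) (by omega),
      s_neg (a := a) (b := b - x) (x := w) (by omega),
      s_neg (a := a + y) (b := b) (x := w) (by omega),
      s_neg (a := a) (b := b - z) (x := w) (by omega)]
  rcases lt_or_ge b w with h2 | h2
  · rw [s_neg (a := a + x) (b := b) (x := w) (by omega),
      s_neg (a := a) (b := b - y) (x := w) (by omega),
      s_neg (a := a + z) (b := b) (x := w) (by omega),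
      s_neg (a := a) (b := b - x) (x := w) (by omega),
      s_neg (a := a + y) (b := b) (x := w) (by omega),
      s_neg (a := a) (b := b - z) (x := w) (by omega)]
  rcases le_or_gt w (a + x) with h3 | h3
  · have e1 : sigmaMap (a + x) b w = w := s_neg (by omega)
    have e2 : sigmaMap a (b - y) w = a + b - y + 1 - w := by
      rw [s_pos (by omega) (by omega)]; try ring
    have e3 : sigmaMap (a + z) b (a + b - y + 1 - w) = w + y + z := by
      rw [s_pos (by omega) (by omega)]; try ring
    have e4 : sigmaMap a (b - x) (w + y + z) = w + y + z := s_neg (by omega)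
    have e5 : sigmaMap (a + y) b (w + y + z) = a + b - z + 1 - w := by
      rw [s_pos (by omega) (by omega)]; try ring
    have e6 : sigmaMap a (b - z) (a + b - z + 1 - w) = w := by
      rw [s_pos (by omega) (by omega)]; try ring
    rw [e1, e2, e3, e4, e5, e6]
  rcases le_or_gt w (a + x + y) with h4 | h4
  · have e1 : sigmaMap (a + x) b w = a + x + b + 1 - w := by
      rw [s_pos (by omega) (by omega)]; try ring
    have e2 : sigmaMap a (b - y) (a + x + b + 1 - w) = a + x + b + 1 - w :=
      s_neg (by omega)
    have e3 : sigmaMap (a + z) b (a + x + b + 1 - w) = w + z - x := by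
      rw [s_pos (by omega) (by omega)]; try ring
    have e4 : sigmaMap a (b - x) (w + z - x) = a + b + 1 - w - z := by
      rw [s_pos (by omega) (by omega)]; try ring
    have e5 : sigmaMap (a + y) b (a + b + 1 - w - z) = a + b + 1 - w - z :=
      s_neg (by omega)
    have e6 : sigmaMap a (b - z) (a + b + 1 - w - z) = w := by
      rw [s_pos (by omega) (by omega)]; try ring
    rw [e1, e2, e3, e4, e5, e6]
  · have e1 : sigmaMap (a + x) b w = a + x + b + 1 - w := by
      rw [s_pos (by omega) (by omega)]; try ring
    have e2 : sigmaMap a (b - y) (a + x + b + 1 - w) = w - x - y := by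
      rw [s_pos (by omega) (by omega)]; try ring
    have e3 : sigmaMap (a + z) b (w - x - y) = w - x - y := s_neg (by omega)
    have e4 : sigmaMap a (b - x) (w - x - y) = a + b + 1 + y - w := by
      rw [s_pos (by omega) (by omega)]; try ring
    have e5 : sigmaMap (a + y) b (a + b + 1 + y - w) = w := by
      rw [s_pos (by omega) (by omega)]; try ring
    have e6 : sigmaMap a (b - z) w = w := s_neg (by omega)
    rw [e1, e2, e3, e4, e5, e6]
end

section
/- There is a well-defined group homomorphism from K_n to the symmetric group on {1,…,n} sending each generator t(a,b) to the permutation σ_{a,b}. -/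
/-- Generators `t(a,b)` of `K_n`: pairs `(a,b)` with `0 ≤ a < b ≤ n`. -/
def Gen (n : ℕ) := {p : ℕ × ℕ // p.1 < p.2 ∧ p.2 ≤ n}

/-- The free-group letter corresponding to the generator `t(a,b)`. -/
def tg {n : ℕ} (a b : ℕ) (h : a < b ∧ b ≤ n) : FreeGroup (Gen n) :=
  FreeGroup.of ⟨(a, b), h⟩

/-- The defining relators of `K_n`. -/
def rels (n : ℕ) : Set (FreeGroup (Gen n)) :=
  {w | ∃ g : Gen n, w = FreeGroup.of g * FreeGroup.of g} ∪
  {w | ∃ a b c d : ℕ, ∃ h : a < b ∧ b ≤ c ∧ c < d ∧ d ≤ n,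
      w = tg a b ⟨h.1, by omega⟩ * tg c d ⟨h.2.2.1, h.2.2.2⟩ *
          tg a b ⟨h.1, by omega⟩ * tg c d ⟨h.2.2.1, h.2.2.2⟩} ∪
  {w | ∃ a b x y : ℕ, ∃ h : a < a + x + y ∧ a + x + y < b ∧ b ≤ n,
      w = tg a b ⟨by omega, h.2.2⟩ * tg (a + x) (b - y) ⟨by omega, by omega⟩ *
          tg a b ⟨by omega, h.2.2⟩ * tg (a + y) (b - x) ⟨by omega, by omega⟩} ∪
  {w | ∃ a b x y z : ℕ, ∃ h : 0 < x ∧ 0 < y ∧ 0 < z ∧ b = a + x + y + z ∧ b ≤ n,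
      w = tg a (b - z) ⟨by omega, by omega⟩ * tg (a + y) b ⟨by omega, h.2.2.2.2⟩ *
          tg a (b - x) ⟨by omega, by omega⟩ * tg (a + z) b ⟨by omega, h.2.2.2.2⟩ *
          tg a (b - y) ⟨by omega, by omega⟩ * tg (a + x) b ⟨by omega, h.2.2.2.2⟩}

/-- The group `K_n`. -/
abbrev K (n : ℕ) := PresentedGroup (rels n)

lemma sigmaMap_spec (a b x : ℤ) :
    (a + 1 ≤ x ∧ x ≤ b ∧ sigmaMap a b x = a + b + 1 - x) ∨
    ((x ≤ a ∨ b < x) ∧ sigmaMap a b x = x) := by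
  unfold sigmaMap; split_ifs with h
  · exact Or.inl ⟨h.1, h.2, rfl⟩
  · exact Or.inr ⟨by omega, rfl⟩

def sperm (n a b : ℕ) (hb : b ≤ n) : Equiv.Perm (Set.Icc (1 : ℤ) (n : ℤ)) :=
  Function.Involutive.toPerm
    (fun x => ⟨sigmaMap a b x, by
      obtain ⟨x, hx⟩ := x
      simp only [Set.mem_Icc] at hx ⊢
      simp only [sigmaMap]
      split_ifs <;> omega⟩)
    (by
      intro x
      apply Subtype.ext
      simp only [sigmaMap]
      split_ifs <;> omega)

lemma sperm_apply (n a b : ℕ) (hb : b ≤ n) (x : Set.Icc (1 : ℤ) (n : ℤ)) :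
    ((sperm n a b hb x : ℤ)) = sigmaMap a b x := rfl

lemma lift_tg (n a b : ℕ) (h : a < b ∧ b ≤ n) :
    FreeGroup.lift (fun g : Gen n => sperm n g.1.1 g.1.2 g.2.2) (tg a b h) = sperm n a b h.2 :=
  FreeGroup.lift_apply_of

theorem stmt_4 (n : ℕ) :
    ∃ φ : K n →* Equiv.Perm (Set.Icc (1 : ℤ) n),
      ∀ (g : Gen n) (x : Set.Icc (1 : ℤ) n),
        ((φ (PresentedGroup.of g)) x : ℤ) = sigmaMap (g.1.1 : ℤ) (g.1.2 : ℤ) (x : ℤ) := by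
  have hrels : ∀ r ∈ rels n,
      FreeGroup.lift (fun g : Gen n => sperm n g.1.1 g.1.2 g.2.2) r = 1 := by
    intro r hr
    rcases hr with ((⟨g, rfl⟩ | ⟨a, b, c, d, h, rfl⟩) | ⟨a, b, x, y, h, rfl⟩) |
      ⟨a, b, x, y, z, h, rfl⟩ <;>
      simp only [map_mul, lift_tg, FreeGroup.lift_apply_of] <;>
      refine Equiv.ext fun p => Subtype.ext ?_ <;>
      simp only [Equiv.Perm.mul_apply, Equiv.Perm.one_apply, sperm_apply]
    · have s1 := sigmaMap_spec (g.1.1 : ℤ) (g.1.2 : ℤ) (p : ℤ)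
      set q1 := sigmaMap (g.1.1 : ℤ) (g.1.2 : ℤ) (p : ℤ)
      have s2 := sigmaMap_spec (g.1.1 : ℤ) (g.1.2 : ℤ) q1
      set q2 := sigmaMap (g.1.1 : ℤ) (g.1.2 : ℤ) q1
      omega
    · have s1 := sigmaMap_spec (c : ℤ) (d : ℤ) (p : ℤ)
      set q1 := sigmaMap (c : ℤ) (d : ℤ) (p : ℤ)
      have s2 := sigmaMap_spec (a : ℤ) (b : ℤ) q1
      set q2 := sigmaMap (a : ℤ) (b : ℤ) q1
      have s3 := sigmaMap_spec (c : ℤ) (d : ℤ) q2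
      set q3 := sigmaMap (c : ℤ) (d : ℤ) q2
      have s4 := sigmaMap_spec (a : ℤ) (b : ℤ) q3
      set q4 := sigmaMap (a : ℤ) (b : ℤ) q3
      omega
    · have s1 := sigmaMap_spec ((a + y : ℕ) : ℤ) ((b - x : ℕ) : ℤ) (p : ℤ)
      set q1 := sigmaMap ((a + y : ℕ) : ℤ) ((b - x : ℕ) : ℤ) (p : ℤ)
      have s2 := sigmaMap_spec (a : ℤ) (b : ℤ) q1
      set q2 := sigmaMap (a : ℤ) (b : ℤ) q1
      have s3 := sigmaMap_spec ((a + x : ℕ) : ℤ) ((b - y : ℕ) : ℤ) q2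
      set q3 := sigmaMap ((a + x : ℕ) : ℤ) ((b - y : ℕ) : ℤ) q2
      have s4 := sigmaMap_spec (a : ℤ) (b : ℤ) q3
      set q4 := sigmaMap (a : ℤ) (b : ℤ) q3
      omega
    · have s1 := sigmaMap_spec ((a + x : ℕ) : ℤ) (b : ℤ) (p : ℤ)
      set q1 := sigmaMap ((a + x : ℕ) : ℤ) (b : ℤ) (p : ℤ)
      have s2 := sigmaMap_spec (a : ℤ) ((b - y : ℕ) : ℤ) q1
      set q2 := sigmaMap (a : ℤ) ((b - y : ℕ) : ℤ) q1
      have s3 := sigmaMap_spec ((a + z : ℕ) : ℤ) (b : ℤ) q2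
      set q3 := sigmaMap ((a + z : ℕ) : ℤ) (b : ℤ) q2
      have s4 := sigmaMap_spec (a : ℤ) ((b - x : ℕ) : ℤ) q3
      set q4 := sigmaMap (a : ℤ) ((b - x : ℕ) : ℤ) q3
      have s5 := sigmaMap_spec ((a + y : ℕ) : ℤ) (b : ℤ) q4
      set q5 := sigmaMap ((a + y : ℕ) : ℤ) (b : ℤ) q4
      have s6 := sigmaMap_spec (a : ℤ) ((b - z : ℕ) : ℤ) q5
      set q6 := sigmaMap (a : ℤ) ((b - z : ℕ) : ℤ) q5
      omega
  refine ⟨PresentedGroup.toGroup hrels, fun g x => ?_⟩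
  rw [PresentedGroup.toGroup.of]
  rfl
end

section
/- For real numbers n₁,…,n₆, the product M(n₁)·M(n₂)·M(n₃)·M(n₄)·M(n₅)·M(n₆) is the identity matrix if and only if there exists a real number k such that (n₄,n₅,n₆) = (n₁+k, n₂−k, n₃+k); equivalently, if and only if (−1)^i (n_i − n_{i+3}) is independent of i ∈ {1,2,3}. -/
def M (x : ℝ) : Matrix (Fin 3) (Fin 3) ℝ := !![0, -1, 0; 1, 1, 0; 0, x, 1]

theorem stmt_7 (n₁ n₂ n₃ n₄ n₅ n₆ : ℝ) :
    (M n₁ * M n₂ * M n₃ * M n₄ * M n₅ * M n₆ = 1 ↔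
      ∃ k : ℝ, n₄ = n₁ + k ∧ n₅ = n₂ - k ∧ n₆ = n₃ + k) ∧
    ((∃ k : ℝ, n₄ = n₁ + k ∧ n₅ = n₂ - k ∧ n₆ = n₃ + k) ↔
      (-(n₁ - n₄) = n₂ - n₅ ∧ n₂ - n₅ = -(n₃ - n₆))) := by
  have hP : (M n₁ * M n₂ * M n₃ * M n₄ * M n₅ * M n₆ : Matrix (Fin 3) (Fin 3) ℝ)
      = !![1,0,0; 0,1,0; n₄+n₅-n₁-n₂, n₅+n₆-n₂-n₃, 1] := by
    simp [M, Matrix.mul_fin_three]; ring_nf; simp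
  constructor
  · rw [hP, Matrix.one_fin_three, ← Matrix.ext_iff]
    constructor
    · intro h
      have h1 := h 2 0
      have h2 := h 2 1
      simp [Matrix.vecHead, Matrix.vecTail] at h1 h2
      exact ⟨n₄ - n₁, by linarith, by linarith, by linarith⟩
    · rintro ⟨k, h1, h2, h3⟩ i j
      fin_cases i <;> fin_cases j <;> simp [Matrix.vecHead, Matrix.vecTail] <;> linarith
  · constructor
    · rintro ⟨k, h1, h2, h3⟩; constructor <;> linarith
    · rintro ⟨h1, h2⟩; exact ⟨n₄ - n₁, by linarith, by linarith, by linarith⟩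
end

section
/- For real numbers n₁, n₂, n₃, n₄, the product L(n₁)·L(n₂)·L(n₃)·L(n₄) is the identity matrix if and only if n₃ = n₁ and n₄ = n₂. -/
def L (x : ℝ) : Matrix (Fin 3) (Fin 3) ℝ := !![0, -1, 0; 1, 0, 0; 0, x, 1]

theorem stmt_9 (n₁ n₂ n₃ n₄ : ℝ) :
    L n₁ * L n₂ * L n₃ * L n₄ = 1 ↔ n₃ = n₁ ∧ n₄ = n₂ := by
  constructor
  · intro h
    have h12 := congrFun (congrFun h 2) 1
    have h20 := congrFun (congrFun h 2) 0
    simp [L, Matrix.mul_apply, Fin.sum_univ_three, Matrix.one_apply] at h12 h20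
    constructor <;> linarith
  · rintro ⟨rfl, rfl⟩
    ext i j
    fin_cases i <;> fin_cases j <;>
      simp [L, Matrix.mul_apply, Fin.sum_univ_three, Matrix.one_apply] <;> ring
end

section
/- There are exactly 15 cyclic sequences (n₁,…,n₆) with entries in {0,1,2}, counted up to cyclic permutation and reversal, such that (−1)^i(n_i − n_{i+3}) (indices mod 6) is independent of i; explicitly these are (0,0,0,0,0,0), (0,0,1,0,0,1), (0,1,0,1,0,1), (0,1,1,0,1,1), (1,1,1,1,1,1), (0,0,2,0,0,2), (0,2,0,2,0,2), (0,2,2,0,2,2), (1,1,2,1,1,2), (1,2,1,2,1,2), (1,2,2,1,2,2), (2,2,2,2,2,2), (1,1,1,0,2,0), (1,1,1,2,0,2), (0,1,2,0,1,2). -/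
/-- A cyclic sequence of length 6 with entries in `{0,1,2}` such that
`(-1)^i (n_i - n_{i+3})` is independent of `i` (indices mod 6). -/
def goodSeq (f : Fin 6 → ℤ) : Prop :=
  (∀ i, f i = 0 ∨ f i = 1 ∨ f i = 2) ∧
  ∃ c : ℤ, ∀ i : Fin 6, (-1 : ℤ) ^ (i : ℕ) * (f i - f (i + 3)) = c

/-- Two cyclic sequences are identified if they differ by a cyclic shift or a reversal
(composition with `i ↦ -i`) followed by a shift. -/
def cyclicEquiv (f g : Fin 6 → ℤ) : Prop :=
  ∃ k : Fin 6, (∀ i, g i = f (i + k)) ∨ (∀ i, g i = f (k - i))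

def repList : List (Fin 6 → ℤ) :=
  [![0,0,0,0,0,0], ![0,0,1,0,0,1], ![0,1,0,1,0,1], ![0,1,1,0,1,1],
   ![1,1,1,1,1,1], ![0,0,2,0,0,2], ![0,2,0,2,0,2], ![0,2,2,0,2,2],
   ![1,1,2,1,1,2], ![1,2,1,2,1,2], ![1,2,2,1,2,2], ![2,2,2,2,2,2],
   ![1,1,1,0,2,0], ![1,1,1,2,0,2], ![0,1,2,0,1,2]]

def toZ6 (F : Fin 6 → Fin 3) : Fin 6 → ℤ := fun i => ((F i : ℕ) : ℤ)

def repList' : List (Fin 6 → Fin 3) :=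
  [![0,0,0,0,0,0], ![0,0,1,0,0,1], ![0,1,0,1,0,1], ![0,1,1,0,1,1],
   ![1,1,1,1,1,1], ![0,0,2,0,0,2], ![0,2,0,2,0,2], ![0,2,2,0,2,2],
   ![1,1,2,1,1,2], ![1,2,1,2,1,2], ![1,2,2,1,2,2], ![2,2,2,2,2,2],
   ![1,1,1,0,2,0], ![1,1,1,2,0,2], ![0,1,2,0,1,2]]

set_option maxRecDepth 100000 in
lemma repList_eq : repList = repList'.map toZ6 := by decide

set_option maxRecDepth 100000 in
lemma main_complete : ∀ F : Fin 6 → Fin 3,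
    (∀ i : Fin 6, (-1 : ℤ) ^ (i : ℕ) * (toZ6 F i - toZ6 F (i + 3)) = toZ6 F 0 - toZ6 F 3) →
    ∃ G ∈ repList', ∃ k : Fin 6,
      (∀ i, G i = F (i + k)) ∨ (∀ i, G i = F (k - i)) := by decide

set_option maxRecDepth 100000 in
lemma main_good : ∀ F ∈ repList',
    (∀ i : Fin 6, (-1 : ℤ) ^ (i : ℕ) * (toZ6 F i - toZ6 F (i + 3)) = toZ6 F 0 - toZ6 F 3) := by
  decide

theorem stmt_10 :
    repList.length = 15 ∧
    (∀ f ∈ repList, goodSeq f) ∧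
    (∀ f, goodSeq f → ∃ g ∈ repList, cyclicEquiv f g) ∧
    repList.Pairwise fun f g => ¬ cyclicEquiv f g := by
  refine ⟨rfl, ?_, ?_, ?_⟩
  · intro f hf
    rw [repList_eq] at hf
    obtain ⟨F, hF, rfl⟩ := List.mem_map.1 hf
    constructor
    · intro i
      have := (F i).isLt
      unfold toZ6
      omega
    · exact ⟨toZ6 F 0 - toZ6 F 3, main_good F hF⟩
  · intro f hf
    obtain ⟨hv, c, hc⟩ := hf
    set F : Fin 6 → Fin 3 := fun i => if f i = 0 then 0 else if f i = 1 then 1 else 2 with hFdef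
    have hfF : ∀ i, f i = toZ6 F i := by
      intro i
      rcases hv i with h | h | h <;> simp [toZ6, hFdef, h]
    have hc0 : c = toZ6 F 0 - toZ6 F 3 := by
      have h0 := hc 0
      rw [hfF 0, hfF (0 + 3)] at h0
      simpa using h0.symm
    have hFg : ∀ i : Fin 6, (-1 : ℤ) ^ (i : ℕ) * (toZ6 F i - toZ6 F (i + 3)) = toZ6 F 0 - toZ6 F 3 := by
      intro i
      rw [← hfF i, ← hfF (i + 3), hc i, hc0]
    obtain ⟨G, hG, k, hk⟩ := main_complete F hFg
    refine ⟨toZ6 G, by rw [repList_eq]; exact List.mem_map_of_mem (f := toZ6) hG, k, ?_⟩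
    rcases hk with hk | hk
    · left; intro i; rw [hfF (i + k), toZ6, toZ6, hk i]
    · right; intro i; rw [hfF (k - i), toZ6, toZ6, hk i]
  · rw [repList_eq]
    unfold cyclicEquiv
    set_option maxRecDepth 100000 in decide
end
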